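/- Let V, Ṽ ∈ ℝ^{d×t} have orthonormal columns, and let x, y ∈ ℝ^d with ‖x‖₂ = ‖y‖₂ = 1. Define d₁ = ‖V^T(x−y)‖₂, d₂ = ‖Ṽ^T(x−y)‖₂, c = ‖V^T Ṽ‖₂ (spectral norm), and s = ‖(I − V V^T) Ṽ‖₂. Then d₁ ≤ d₂·c + 2s. -/

import Mathlib

open Matrix
open scoped Matrix.Norms.L2Operator

set_option linter.unusedSectionVars false

section Aux

variable {m n : Type*} [Fintype m] [Fintype n] [DecidableEq m] [DecidableEq n]

/-- op norm upper bound via action on vectors -/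
lemma my_opNorm_le (A : Matrix m n ℝ) {c : ℝ} (hc : 0 ≤ c)
    (h : ∀ x : EuclideanSpace ℝ n,
      ‖(WithLp.equiv 2 (m → ℝ)).symm (A.mulVec ((WithLp.equiv 2 (n → ℝ)) x))‖ ≤ c * ‖x‖) :
    ‖A‖ ≤ c := by
  rw [Matrix.l2_opNorm_def]
  refine ContinuousLinearMap.opNorm_le_bound _ hc fun x => ?_
  simpa [Matrix.toEuclideanLin_apply] using h x

lemma my_mulVec_norm_le (A : Matrix m n ℝ) (v : n → ℝ) :
    ‖(WithLp.equiv 2 (m → ℝ)).symm (A.mulVec v)‖ ≤ ‖A‖ * ‖(WithLp.equiv 2 (n → ℝ)).symm v‖ := by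
  simpa using A.l2_opNorm_mulVec ((WithLp.equiv 2 (n → ℝ)).symm v)

set_option linter.unusedSectionVars false

lemma my_norm_le_frobenius (A : Matrix m n ℝ) :
    ‖A‖ ≤ Real.sqrt (∑ i, ∑ j, A i j ^ 2) := by
  refine my_opNorm_le A (Real.sqrt_nonneg _) fun x => ?_
  rw [EuclideanSpace.norm_eq, EuclideanSpace.norm_eq]
  rw [← Real.sqrt_mul (by positivity)]
  apply Real.sqrt_le_sqrt
  simp only [WithLp.equiv_symm_apply, PiLp.toLp_apply, Real.norm_eq_abs, sq_abs]
  rw [Finset.sum_mul]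
  refine Finset.sum_le_sum fun i _ => ?_
  rw [Matrix.mulVec, dotProduct]
  calc (∑ j, A i j * (WithLp.equiv 2 (n → ℝ)) x j) ^ 2
      ≤ (∑ j, A i j ^ 2) * ∑ j, ((WithLp.equiv 2 (n → ℝ)) x j) ^ 2 :=
        Finset.sum_mul_sq_le_sq_mul_sq Finset.univ _ _
    _ = (∑ j, A i j ^ 2) * ∑ j, x j ^ 2 := rfl

lemma my_psd_norm_le_trace {P : Matrix n n ℝ} (hP : P.PosSemidef) : ‖P‖ ≤ P.trace := by
  open scoped MatrixOrder in
  obtain ⟨B, rfl⟩ := CStarAlgebra.nonneg_iff_eq_star_mul_self.mp hP.nonneg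
  rw [Matrix.star_eq_conjTranspose]
  have htr : (Bᴴ * B).trace = ∑ i, ∑ j, B i j ^ 2 := by
    rw [Matrix.trace]
    simp only [Matrix.diag_apply, Matrix.mul_apply, Matrix.conjTranspose_apply, star_trivial]
    rw [Finset.sum_comm]
    exact Finset.sum_congr rfl fun i _ => Finset.sum_congr rfl fun j _ => (sq (B i j)).symm
  have h1 : ‖Bᴴ * B‖ = ‖B‖ * ‖B‖ := Matrix.l2_opNorm_conjTranspose_mul_self B
  have h2 := my_norm_le_frobenius B
  have h3 : ‖B‖ * ‖B‖ ≤ ∑ i, ∑ j, B i j ^ 2 := by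
    have hnn : (0:ℝ) ≤ ∑ i, ∑ j, B i j ^ 2 := by positivity
    calc ‖B‖ * ‖B‖ ≤ Real.sqrt (∑ i, ∑ j, B i j ^ 2) * Real.sqrt (∑ i, ∑ j, B i j ^ 2) :=
          mul_le_mul h2 h2 (norm_nonneg _) (Real.sqrt_nonneg _)
      _ = _ := Real.mul_self_sqrt hnn
  rw [htr, h1]; exact h3

lemma my_coord_le_enorm (v : n → ℝ) (i : n) :
    |v i| ≤ ‖(WithLp.equiv 2 (n → ℝ)).symm v‖ := by
  rw [EuclideanSpace.norm_eq]
  have h1 : |v i| = Real.sqrt ((v i)^2) := (Real.sqrt_sq_eq_abs _).symm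
  rw [h1]
  apply Real.sqrt_le_sqrt
  have : (v i)^2 = ‖((WithLp.equiv 2 (n → ℝ)).symm v) i‖^2 := by
    simp [Real.norm_eq_abs, sq_abs]
  rw [this]
  exact Finset.single_le_sum (f := fun k => ‖((WithLp.equiv 2 (n → ℝ)).symm v) k‖^2)
    (fun k _ => by positivity) (Finset.mem_univ i)

lemma my_entry_le_norm (P : Matrix m n ℝ) (i : m) (j : n) : |P i j| ≤ ‖P‖ := by
  have h := my_mulVec_norm_le P (Pi.single j 1)
  have hx : ‖(WithLp.equiv 2 (n → ℝ)).symm (Pi.single j 1)‖ = 1 := by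
    have heq : (WithLp.equiv 2 (n → ℝ)).symm (Pi.single j (1:ℝ))
        = EuclideanSpace.single j (1:ℝ) := rfl
    rw [heq, EuclideanSpace.norm_single]; norm_num
  have hcoord := my_coord_le_enorm (P.mulVec (Pi.single j 1)) i
  have hv : P.mulVec (Pi.single j 1) i = P i j := by simp [Matrix.mulVec_single]
  rw [hv] at hcoord
  rw [hx, mul_one] at h
  exact le_trans hcoord h

lemma my_trace_le_card_norm (P : Matrix n n ℝ) :
    P.trace ≤ (Fintype.card n : ℝ) * ‖P‖ := by
  rw [Matrix.trace]
  calc (∑ i, P.diag i) ≤ ∑ _i : n, ‖P‖ :=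
        Finset.sum_le_sum fun i _ => le_trans (le_abs_self _) (my_entry_le_norm P i i)
    _ = (Fintype.card n : ℝ) * ‖P‖ := by
        rw [Finset.sum_const, nsmul_eq_mul]; rfl

lemma my_norm_pow_two_pow {A : Matrix n n ℝ} (hA : Aᵀ = A) (k : ℕ) :
    ‖A ^ (2^k)‖ = ‖A‖ ^ (2^k) := by
  induction k with
  | zero => simp
  | succ k ih =>
    have hsym : (A ^ (2^k))ᵀ = A ^ (2^k) := by rw [Matrix.transpose_pow, hA]
    have h2 : (2:ℕ)^(k+1) = 2^k + 2^k := by rw [pow_succ, mul_two]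
    have h1 : A ^ (2^(k+1)) = (A ^ (2^k))ᴴ * (A ^ (2^k)) := by
      rw [Matrix.conjTranspose_eq_transpose_of_trivial, hsym, ← pow_add, h2]
    rw [h1, Matrix.l2_opNorm_conjTranspose_mul_self, ih, ← pow_add, h2]

lemma my_mul_pow_succ (A B : Matrix n n ℝ) (k : ℕ) :
    (A * B) ^ (k+1) = A * ((B * A) ^ k * B) := by
  induction k with
  | zero => simp
  | succ k ih =>
    rw [pow_succ, ih, pow_succ]
    noncomm_ring

lemma my_mul_pow_trace (A B : Matrix n n ℝ) (k : ℕ) :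
    ((A * B) ^ k).trace = ((B * A) ^ k).trace := by
  cases k with
  | zero => rfl
  | succ k =>
    rw [my_mul_pow_succ, Matrix.trace_mul_comm, mul_assoc, ← pow_succ]

lemma my_trace_one_sub_pow (X Y : Matrix n n ℝ)
    (h : ∀ j, (X^j).trace = (Y^j).trace) (k : ℕ) :
    ((1 - X)^k).trace = ((1 - Y)^k).trace := by
  have key : ∀ Z : Matrix n n ℝ, ((1 - Z)^k).trace
      = ∑ m ∈ Finset.range (k+1), (-1:ℝ)^(k-m) * (k.choose m) * (Z^(k-m)).trace := by
    intro Z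
    rw [sub_eq_add_neg, (Commute.one_left (-Z)).add_pow, Matrix.trace_sum]
    refine Finset.sum_congr rfl fun m _ => ?_
    have hneg : (-Z) = (-1:ℝ) • Z := by simp
    rw [one_pow, one_mul, hneg, smul_pow, smul_mul_assoc, Matrix.trace_smul]
    have hc : (Z^(k-m) * (↑(k.choose m) : Matrix n n ℝ)) = (k.choose m) • Z^(k-m) := by
      rw [nsmul_eq_mul, (Nat.cast_commute (k.choose m) (Z^(k-m))).eq]
    rw [hc, Matrix.trace_smul, nsmul_eq_mul, smul_eq_mul]
    ring
  rw [key X, key Y]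
  exact Finset.sum_congr rfl fun m _ => by rw [h]

lemma my_dot_self_eq (v : n → ℝ) :
    v ⬝ᵥ v = ‖(WithLp.equiv 2 (n → ℝ)).symm v‖^2 := by
  rw [EuclideanSpace.norm_eq, Real.sq_sqrt (by positivity)]
  simp [dotProduct, sq]

lemma my_psd_one_sub (M : Matrix n n ℝ) (hM : ‖M‖ ≤ 1) : (1 - Mᵀ * M).PosSemidef := by
  refine Matrix.PosSemidef.of_dotProduct_mulVec_nonneg ?_ ?_
  · simp [Matrix.IsHermitian, Matrix.conjTranspose_sub, Matrix.conjTranspose_mul,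
      Matrix.conjTranspose_eq_transpose_of_trivial]
  · intro x
    rw [star_trivial, Matrix.sub_mulVec, Matrix.one_mulVec, dotProduct_sub, sub_nonneg,
      ← Matrix.mulVec_mulVec, Matrix.dotProduct_mulVec, Matrix.vecMul_transpose]
    rw [my_dot_self_eq, my_dot_self_eq]
    have h1 := my_mulVec_norm_le M x
    have h2 : ‖M‖ * ‖(WithLp.equiv 2 (n → ℝ)).symm x‖ ≤ ‖(WithLp.equiv 2 (n → ℝ)).symm x‖ := by
      nlinarith [norm_nonneg ((WithLp.equiv 2 (n → ℝ)).symm x), norm_nonneg M]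
    nlinarith [norm_nonneg ((WithLp.equiv 2 (n → ℝ)).symm (M.mulVec x))]

lemma my_norm_transpose (M : Matrix m n ℝ) : ‖Mᵀ‖ = ‖M‖ := by
  rw [← Matrix.conjTranspose_eq_transpose_of_trivial, Matrix.l2_opNorm_conjTranspose]

lemma my_key_le (M : Matrix n n ℝ) (hM : ‖M‖ ≤ 1) : ‖1 - Mᵀ * M‖ ≤ ‖1 - M * Mᵀ‖ := by
  have hMt : ‖Mᵀ‖ ≤ 1 := le_trans (le_of_eq (my_norm_transpose M)) hM
  have hA : (1 - Mᵀ * M).PosSemidef := my_psd_one_sub M hM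
  have hB : (1 - M * Mᵀ).PosSemidef := by
    have := my_psd_one_sub Mᵀ hMt
    rwa [Matrix.transpose_transpose] at this
  set A := 1 - Mᵀ * M with hAdef
  set B := 1 - M * Mᵀ with hBdef
  have hAsym : Aᵀ = A := by
    rw [← Matrix.conjTranspose_eq_transpose_of_trivial]; exact hA.isHermitian.eq
  have htr : ∀ k, (A ^ k).trace = (B ^ k).trace := fun k =>
    my_trace_one_sub_pow _ _ (fun j => my_mul_pow_trace Mᵀ M j) k
  have main : ∀ k : ℕ, ‖A‖ ^ (2^k) ≤ (Fintype.card n : ℝ) * ‖B‖ ^ (2^k) := by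
    intro k
    calc ‖A‖ ^ (2^k) = ‖A ^ (2^k)‖ := (my_norm_pow_two_pow hAsym k).symm
      _ ≤ (A ^ (2^k)).trace := my_psd_norm_le_trace (hA.pow _)
      _ = (B ^ (2^k)).trace := htr _
      _ ≤ (Fintype.card n : ℝ) * ‖B ^ (2^k)‖ := my_trace_le_card_norm _
      _ ≤ (Fintype.card n : ℝ) * ‖B‖ ^ (2^k) := by
          refine mul_le_mul_of_nonneg_left ?_ (Nat.cast_nonneg _)
          exact norm_pow_le' B (by positivity)
  by_contra hlt
  push_neg at hlt
  have hBnn : (0:ℝ) ≤ ‖B‖ := norm_nonneg _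
  rcases eq_or_lt_of_le hBnn with hB0 | hB0
  · have h1 : ‖A‖ ≤ (Fintype.card n : ℝ) * ‖B‖ := by simpa using main 0
    rw [← hB0, mul_zero] at h1
    linarith
  · set r : ℝ := ‖A‖ / ‖B‖ with hrdef
    have hr : 1 < r := (one_lt_div hB0).mpr hlt
    have hrk : ∀ k : ℕ, r ^ (2^k) ≤ (Fintype.card n : ℝ) := by
      intro k
      rw [hrdef, div_pow, div_le_iff₀ (by positivity)]
      exact main k
    obtain ⟨j, hj⟩ := pow_unbounded_of_one_lt (Fintype.card n : ℝ) hr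
    have : r ^ j ≤ r ^ (2^j) := pow_le_pow_right₀ hr.le (Nat.lt_two_pow_self (n := j)).le
    exact absurd (lt_of_lt_of_le hj (le_trans this (hrk j))) (lt_irrefl _)

lemma my_key_eq (M : Matrix n n ℝ) (hM : ‖M‖ ≤ 1) : ‖1 - Mᵀ * M‖ = ‖1 - M * Mᵀ‖ := by
  refine le_antisymm (my_key_le M hM) ?_
  have hMt : ‖Mᵀ‖ ≤ 1 := le_trans (le_of_eq (my_norm_transpose M)) hM
  have := my_key_le Mᵀ hMt
  rwa [Matrix.transpose_transpose] at this

lemma my_norm_one_le : ‖(1 : Matrix n n ℝ)‖ ≤ 1 := by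
  refine my_opNorm_le 1 zero_le_one fun x => ?_
  rw [Matrix.one_mulVec, one_mul]
  exact le_of_eq rfl

lemma my_orth_norm_le (V : Matrix m n ℝ) (hV : Vᵀ * V = 1) : ‖V‖ ≤ 1 := by
  have h : ‖V‖ * ‖V‖ ≤ 1 := by
    rw [← Matrix.l2_opNorm_conjTranspose_mul_self,
      Matrix.conjTranspose_eq_transpose_of_trivial, hV]
    exact my_norm_one_le
  nlinarith [norm_nonneg V]


end Aux

/-- The Euclidean (2-)norm of a vector indexed by `Fin m`. -/
noncomputable def vecEnorm {m : ℕ} (v : Fin m → ℝ) : ℝ :=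
  ‖(WithLp.equiv 2 (Fin m → ℝ)).symm v‖

/-- For orthonormal `V, Ṽ` and unit vectors `x, y`:
`‖Vᵀ(x−y)‖ ≤ ‖Ṽᵀ(x−y)‖·‖VᵀṼ‖ + 2‖(I−VVᵀ)Ṽ‖` (spectral norms on matrices). -/
theorem distance_upper_bound {d t : ℕ} (V W : Matrix (Fin d) (Fin t) ℝ)
    (hV : Vᵀ * V = 1) (hW : Wᵀ * W = 1)
    (x y : Fin d → ℝ) (hx : vecEnorm x = 1) (hy : vecEnorm y = 1) :
    vecEnorm (Vᵀ.mulVec (x - y))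
      ≤ vecEnorm (Wᵀ.mulVec (x - y)) * ‖Vᵀ * W‖ + 2 * ‖(1 - V * Vᵀ) * W‖ := by
  set z : Fin d → ℝ := x - y with hz
  set M : Matrix (Fin t) (Fin t) ℝ := Vᵀ * W with hM
  have hMt : Mᵀ = Wᵀ * V := by rw [hM, Matrix.transpose_mul, Matrix.transpose_transpose]
  have hVn : ‖V‖ ≤ 1 := my_orth_norm_le V hV
  have hWn : ‖W‖ ≤ 1 := my_orth_norm_le W hW
  have hVtn : ‖Vᵀ‖ ≤ 1 := le_trans (le_of_eq (my_norm_transpose V)) hVn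
  have hMn : ‖M‖ ≤ 1 := by
    refine le_trans (Matrix.l2_opNorm_mul Vᵀ W) ?_
    exact mul_le_one₀ hVtn (norm_nonneg _) hWn
  have hWc : ∀ (X : Matrix (Fin t) (Fin t) ℝ), Wᵀ * (W * X) = X := fun X => by
    rw [← Matrix.mul_assoc, hW, Matrix.one_mul]
  have hVc : ∀ (X : Matrix (Fin t) (Fin t) ℝ), Vᵀ * (V * X) = X := fun X => by
    rw [← Matrix.mul_assoc, hV, Matrix.one_mul]
  -- sin-theta symmetry
  have hadjW : ((1 - W * Wᵀ) * V)ᴴ = Vᵀ * (1 - W * Wᵀ) := by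
    simp [Matrix.conjTranspose_mul, Matrix.conjTranspose_sub,
      Matrix.conjTranspose_eq_transpose_of_trivial, Matrix.transpose_mul,
      Matrix.transpose_transpose]
  have hsq1 : ‖(1 - W * Wᵀ) * V‖ * ‖(1 - W * Wᵀ) * V‖ = ‖1 - M * Mᵀ‖ := by
    rw [← Matrix.l2_opNorm_conjTranspose_mul_self ((1 - W * Wᵀ) * V), hadjW]
    congr 1
    rw [hM, hMt]
    simp only [Matrix.mul_sub, Matrix.sub_mul, Matrix.mul_assoc, hWc, hV,
      Matrix.mul_one, Matrix.one_mul]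
    abel
  have hsq2 : ‖(1 - V * Vᵀ) * W‖ * ‖(1 - V * Vᵀ) * W‖ = ‖1 - Mᵀ * M‖ := by
    have hadjV : ((1 - V * Vᵀ) * W)ᴴ = Wᵀ * (1 - V * Vᵀ) := by
      simp [Matrix.conjTranspose_mul, Matrix.conjTranspose_sub,
        Matrix.conjTranspose_eq_transpose_of_trivial, Matrix.transpose_mul,
        Matrix.transpose_transpose]
    rw [← Matrix.l2_opNorm_conjTranspose_mul_self ((1 - V * Vᵀ) * W), hadjV]
    congr 1
    rw [hM, hMt]
    simp only [Matrix.mul_sub, Matrix.sub_mul, Matrix.mul_assoc, hVc, hW,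
      Matrix.mul_one, Matrix.one_mul]
    abel
  have hkey : ‖(1 - W * Wᵀ) * V‖ = ‖(1 - V * Vᵀ) * W‖ := by
    have h := my_key_eq M hMn
    have h2 : ‖(1 - W * Wᵀ) * V‖ * ‖(1 - W * Wᵀ) * V‖
        = ‖(1 - V * Vᵀ) * W‖ * ‖(1 - V * Vᵀ) * W‖ := by rw [hsq1, hsq2, ← h]
    nlinarith [norm_nonneg ((1 - W * Wᵀ) * V), norm_nonneg ((1 - V * Vᵀ) * W)]
  have hs' : ‖Vᵀ * (1 - W * Wᵀ)‖ = ‖(1 - V * Vᵀ) * W‖ := by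
    rw [← hadjW, Matrix.l2_opNorm_conjTranspose, hkey]
  -- decomposition
  have hdecomp : Vᵀ.mulVec z
      = (Vᵀ * W).mulVec (Wᵀ.mulVec z) + (Vᵀ * (1 - W * Wᵀ)).mulVec z := by
    have hm : Vᵀ * W * Wᵀ + Vᵀ * (1 - W * Wᵀ) = Vᵀ := by
      rw [Matrix.mul_sub, Matrix.mul_one, ← Matrix.mul_assoc]
      abel
    rw [Matrix.mulVec_mulVec, ← Matrix.add_mulVec, hm]
  have hznorm : vecEnorm z ≤ 2 := by
    rw [vecEnorm, hz, WithLp.equiv_symm_apply, WithLp.toLp_sub]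
    calc ‖_ - _‖ ≤ ‖(WithLp.equiv 2 (Fin d → ℝ)).symm x‖
          + ‖(WithLp.equiv 2 (Fin d → ℝ)).symm y‖ := norm_sub_le _ _
      _ = 2 := by rw [← vecEnorm, ← vecEnorm, hx, hy]; norm_num
  have ht1 : vecEnorm ((Vᵀ * W).mulVec (Wᵀ.mulVec z))
      ≤ ‖Vᵀ * W‖ * vecEnorm (Wᵀ.mulVec z) := my_mulVec_norm_le _ _
  have ht2 : vecEnorm ((Vᵀ * (1 - W * Wᵀ)).mulVec z)
      ≤ ‖Vᵀ * (1 - W * Wᵀ)‖ * vecEnorm z := my_mulVec_norm_le _ _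
  have htri : vecEnorm (Vᵀ.mulVec z)
      ≤ vecEnorm ((Vᵀ * W).mulVec (Wᵀ.mulVec z)) + vecEnorm ((Vᵀ * (1 - W * Wᵀ)).mulVec z) := by
    rw [hdecomp, vecEnorm, WithLp.equiv_symm_apply, WithLp.toLp_add]
    exact norm_add_le _ _
  have hsnn : (0:ℝ) ≤ ‖(1 - V * Vᵀ) * W‖ := norm_nonneg _
  calc vecEnorm (Vᵀ.mulVec z) ≤ _ + _ := htri
    _ ≤ ‖Vᵀ * W‖ * vecEnorm (Wᵀ.mulVec z) + ‖Vᵀ * (1 - W * Wᵀ)‖ * vecEnorm z :=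
        add_le_add ht1 ht2
    _ ≤ vecEnorm (Wᵀ.mulVec z) * ‖Vᵀ * W‖ + 2 * ‖(1 - V * Vᵀ) * W‖ := by
        rw [mul_comm (‖Vᵀ * W‖), hs']
        refine add_le_add_right ?_ _
        rw [mul_comm]
        exact mul_le_mul_of_nonneg_right hznorm hsnn
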